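/- arXiv:2201.03626 — 2 statements merged into one kernel-verified Lean document; each statement's English description precedes it below -/
import Mathlib

section
/- Let X and Y be real algebraic sets in ℝ^n with Y ⊆ X, and suppose there is a polynomial map φ : ℝ^n → ℝ^n (each coordinate of φ given by evaluation of a polynomial in ℝ[x₁,…,xₙ]) such that φ maps Y onto X, i.e., φ(Y) = X. Then Y = X. -/
/-- **Lemma (surjective polynomial map onto a superset).**
Let `X, Y ⊆ ℝⁿ` be real algebraic sets (each the zero locus of its vanishing ideal) with
`Y ⊆ X`, and suppose there is a polynomial map `φ : ℝⁿ → ℝⁿ` (each coordinate given by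
evaluation of a polynomial) with `φ(Y) = X`.  Then `Y = X`. -/
theorem eq_of_polynomialMap_surjective (n : ℕ) (X Y : Set (Fin n → ℝ))
    (hXalg : X = MvPolynomial.zeroLocus ℝ (MvPolynomial.vanishingIdeal ℝ X))
    (hYalg : Y = MvPolynomial.zeroLocus ℝ (MvPolynomial.vanishingIdeal ℝ Y))
    (hYX : Y ⊆ X)
    (p : Fin n → MvPolynomial (Fin n) ℝ)
    (hsurj : (fun x : Fin n → ℝ => fun i => MvPolynomial.eval x (p i)) '' Y = X) :
    Y = X := by
  classical
  set φ : (Fin n → ℝ) → (Fin n → ℝ) := fun x i => MvPolynomial.eval x (p i) with hφ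
  set θ : MvPolynomial (Fin n) ℝ →ₐ[ℝ] MvPolynomial (Fin n) ℝ := MvPolynomial.bind₁ p with hθ
  have hae : ∀ (x : Fin n → ℝ) (g : MvPolynomial (Fin n) ℝ),
      MvPolynomial.aeval x g = MvPolynomial.eval x g := by
    intro x g
    rw [MvPolynomial.aeval_eq_eval₂Hom]
    rfl
  have keval : ∀ (j : ℕ) (x : Fin n → ℝ) (f : MvPolynomial (Fin n) ℝ),
      MvPolynomial.eval x (θ^[j] f) = MvPolynomial.eval (φ^[j] x) f := by
    intro j
    induction j with
    | zero => intro x f; simp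
    | succ j ih =>
      intro x f
      rw [Function.iterate_succ_apply, Function.iterate_succ_apply', ih]
      rw [hθ, ← hae, MvPolynomial.aeval_bind₁]
      simp only [hae, hφ]
  -- the descending chain of algebraic sets
  set V : ℕ → Set (Fin n → ℝ) := fun m => {x | ∀ j ≤ m, φ^[j] x ∈ Y} with hV
  -- membership in Y via the vanishing ideal
  have hYmem : ∀ z : Fin n → ℝ,
      z ∈ Y ↔ ∀ f ∈ MvPolynomial.vanishingIdeal ℝ Y, MvPolynomial.eval z f = 0 := by
    intro z
    constructor
    · intro hz f hf
      exact hf z hz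
    · intro h
      rw [hYalg]
      exact h
  -- each V m is a zero locus
  have hValg : ∀ m, V m = MvPolynomial.zeroLocus ℝ (MvPolynomial.vanishingIdeal ℝ (V m)) := by
    intro m
    have : V m = MvPolynomial.zeroLocus ℝ (Ideal.span
        {g | ∃ j ≤ m, ∃ f ∈ MvPolynomial.vanishingIdeal ℝ Y, g = θ^[j] f}) := by
      rw [MvPolynomial.zeroLocus_span]
      ext x
      constructor
      · rintro hx g ⟨j, hj, f, hf, rfl⟩
        rw [hae, keval]
        exact hf _ (hx j hj)
      · intro hx j hj
        rw [hYmem]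
        intro f hf
        rw [← keval]
        exact hx _ ⟨j, hj, f, hf, rfl⟩
    rw [this]
    exact (MvPolynomial.zeroLocus_vanishingIdeal_galoisConnection.l_u_l_eq_l _).symm
  -- the chain of vanishing ideals is monotone
  have hVanti : ∀ m m', m ≤ m' → V m' ⊆ V m := by
    intro m m' hmm' x hx j hj
    exact hx j (le_trans hj hmm')
  have hmono : Monotone (fun m => MvPolynomial.vanishingIdeal ℝ (V m)) := by
    intro m m' hmm'
    exact MvPolynomial.vanishingIdeal_anti_mono (hVanti m m' hmm')
  -- Noetherian: the chain stabilizes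
  obtain ⟨N, hN⟩ := monotone_stabilizes_iff_noetherian.mpr inferInstance
    ⟨fun m => MvPolynomial.vanishingIdeal ℝ (V m), hmono⟩
  have hVstab : V N = V (N + 1) := by
    have h1 := hN (N + 1) (Nat.le_succ N)
    have h2 : MvPolynomial.vanishingIdeal ℝ (V N) = MvPolynomial.vanishingIdeal ℝ (V (N + 1)) := h1
    rw [hValg N, hValg (N + 1), h2]
  -- backward chains: every point of X has a preimage chain of any length inside Y
  have hchain : ∀ k, ∀ x ∈ X, ∃ y ∈ V k, φ^[k + 1] y = x := by
    intro k
    induction k with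
    | zero =>
      intro x hx
      rw [← hsurj] at hx
      obtain ⟨y, hy, hyx⟩ := hx
      refine ⟨y, ?_, ?_⟩
      · intro j hj
        interval_cases j
        simpa using hy
      · simpa using hyx
    | succ k ih =>
      intro x hx
      obtain ⟨y, hy, hyx⟩ := ih x hx
      have hyY : y ∈ Y := by simpa using hy 0 (Nat.zero_le k)
      have hyX' : y ∈ X := hYX hyY
      rw [← hsurj] at hyX'
      obtain ⟨z, hz, hzy⟩ := hyX'
      have hzy' : φ z = y := hzy
      refine ⟨z, ?_, ?_⟩
      · intro j hj
        match j with
        | 0 => simpa using hz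
        | (i + 1) =>
          rw [Function.iterate_succ_apply, hzy']
          exact hy i (Nat.succ_le_succ_iff.mp hj)
      · rw [Function.iterate_succ_apply, hzy']
        exact hyx
  -- conclude
  apply Set.Subset.antisymm hYX
  intro x hx
  obtain ⟨y, hy, hyx⟩ := hchain N x hx
  have hy' : y ∈ V (N + 1) := hVstab ▸ hy
  have := hy' (N + 1) le_rfl
  rwa [hyx] at this
end

section
/- Let ι : G → H be a group homomorphism, where G is residually finite. Suppose that for every N ≥ 1, every group homomorphism ρ : G → SO(N, ℝ) factors through ι, i.e., there exists a homomorphism ρ' : H → SO(N, ℝ) with ρ' ∘ ι = ρ. Then ι is injective. -/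
open Equiv Matrix

section PermSO

variable {m : Type*} [Fintype m] [DecidableEq m]

/-- The permutation-matrix map `σ ↦ permMatrix σ⁻¹` as a monoid hom to the matrix ring. -/
noncomputable def permMatrixHom (m : Type*) [Fintype m] [DecidableEq m] :
    Perm m →* Matrix m m ℝ where
  toFun σ := (σ⁻¹).permMatrix ℝ
  map_one' := by
    show (Equiv.refl m).toPEquiv.toMatrix = 1
    rw [Equiv.toPEquiv_refl, PEquiv.toMatrix_refl]
  map_mul' σ τ := by
    show ((σ * τ)⁻¹).permMatrix ℝ = (σ⁻¹).permMatrix ℝ * (τ⁻¹).permMatrix ℝ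
    rw [_root_.mul_inv_rev]
    show ((σ⁻¹).trans (τ⁻¹)).toPEquiv.toMatrix = _
    rw [Equiv.toPEquiv_trans, PEquiv.toMatrix_trans]

omit [Fintype m] in
lemma transpose_permMatrix (σ : Perm m) :
    (σ.permMatrix ℝ)ᵀ = (σ⁻¹).permMatrix ℝ := by
  show (σ.toPEquiv.toMatrix)ᵀ = (σ.symm).toPEquiv.toMatrix
  rw [Equiv.toPEquiv_symm, PEquiv.toMatrix_symm]

omit [Fintype m] in
lemma star_permMatrix (σ : Perm m) :
    star (σ.permMatrix ℝ) = (σ⁻¹).permMatrix ℝ := by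
  rw [Matrix.star_eq_conjTranspose, ← _root_.transpose_permMatrix]
  ext i j
  simp [conjTranspose_apply]

omit [Fintype m] in
lemma permMatrix_eq_one_iff (σ : Perm m) : σ.permMatrix ℝ = 1 ↔ σ = 1 := by
  constructor
  · intro h
    ext i
    have := congrFun (congrFun h i) (σ i)
    simp [PEquiv.toMatrix_apply, toPEquiv_apply, Matrix.one_apply] at this
    exact this.symm
  · rintro rfl
    show (Equiv.refl m).toPEquiv.toMatrix = 1
    rw [Equiv.toPEquiv_refl, PEquiv.toMatrix_refl]

lemma permMatrix_inv_mul_permMatrix (σ : Perm m) :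
    ((σ⁻¹).permMatrix ℝ) * (σ.permMatrix ℝ) = 1 := by
  show (σ.symm.toPEquiv.toMatrix * σ.toPEquiv.toMatrix : Matrix m m ℝ) = 1
  rw [← PEquiv.toMatrix_trans, ← Equiv.toPEquiv_trans, Equiv.symm_trans_self,
    Equiv.toPEquiv_refl, PEquiv.toMatrix_refl]

lemma permMatrixHom_mem_SO {σ : Perm m} (h : Perm.sign σ = 1) :
    permMatrixHom m σ ∈ specialOrthogonalGroup m ℝ := by
  refine ⟨mem_unitaryGroup_iff.mpr ?_, ?_⟩
  · show (σ⁻¹).permMatrix ℝ * star ((σ⁻¹).permMatrix ℝ) = 1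
    rw [star_permMatrix, inv_inv]
    exact permMatrix_inv_mul_permMatrix σ
  · show ((σ⁻¹).permMatrix ℝ).det = 1
    rw [Matrix.det_permutation]
    simp [h]

lemma reindex_mem_SO {n : Type*} [Fintype n] [DecidableEq n] (e : m ≃ n)
    {A : Matrix m m ℝ} (hA : A ∈ specialOrthogonalGroup m ℝ) :
    reindexAlgEquiv ℝ ℝ e A ∈ specialOrthogonalGroup n ℝ := by
  obtain ⟨h1, h2⟩ := hA
  rw [SetLike.mem_coe, mem_unitaryGroup_iff] at h1
  rw [SetLike.mem_coe, MonoidHom.mem_mker] at h2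
  refine ⟨mem_unitaryGroup_iff.mpr ?_, ?_⟩
  · have : star (reindexAlgEquiv ℝ ℝ e A) = reindexAlgEquiv ℝ ℝ e (star A) := by
      simp only [reindexAlgEquiv_apply, Matrix.star_eq_conjTranspose, conjTranspose_reindex]
    rw [this, ← map_mul (reindexAlgEquiv ℝ ℝ e), h1, _root_.map_one]
  · show (reindexAlgEquiv ℝ ℝ e A).det = 1
    rw [reindexAlgEquiv_apply, det_reindex_self]
    exact h2

end PermSO

/-- Let `ι : G → H` be a group homomorphism with `G` residually finite.  If for every `N ≥ 1`
every homomorphism `ρ : G → SO(N, ℝ)` factors through `ι` (i.e. there is `ρ' : H → SO(N, ℝ)`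
with `ρ' ∘ ι = ρ`), then `ι` is injective. -/
theorem injective_of_SO_factorization (G H : Type*) [Group G] [Group H] (ι : G →* H)
    (hres : ∀ g : G, g ≠ 1 → ∃ (Q : Type) (_ : Group Q) (_ : Finite Q)
      (f : G →* Q), f g ≠ 1)
    (hfactor : ∀ N : ℕ, 1 ≤ N →
      ∀ ρ : G →* Matrix.specialOrthogonalGroup (Fin N) ℝ,
        ∃ ρ' : H →* Matrix.specialOrthogonalGroup (Fin N) ℝ, ρ'.comp ι = ρ) :
    Function.Injective ι := by
  rw [injective_iff_map_eq_one]
  intro g hg1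
  by_contra hg
  obtain ⟨Q, _, _, f, hf⟩ := hres g hg
  classical
  have : Fintype Q := Fintype.ofFinite Q
  -- sign-correcting hom into permutations of Bool
  let bs : ℤˣ →* Perm Bool :=
  { toFun := fun u => if u = 1 then 1 else Equiv.swap false true
    map_one' := by simp
    map_mul' := by
      intro u v
      rcases Int.units_eq_one_or u with rfl | rfl <;>
        rcases Int.units_eq_one_or v with rfl | rfl <;>
        simp [Equiv.swap_mul_self] }
  let J : Perm Q →* Perm (Q ⊕ Bool) :=
    (Equiv.Perm.sumCongrHom Q Bool).comp ((MonoidHom.id (Perm Q)).prod (bs.comp Equiv.Perm.sign))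
  have hJ : ∀ σ : Perm Q, J σ = Equiv.sumCongr σ (bs (Perm.sign σ)) := fun _ => rfl
  have hsignJ : ∀ σ : Perm Q, Perm.sign (J σ) = 1 := by
    intro σ
    rw [hJ, Equiv.Perm.sign_sumCongr]
    rcases Int.units_eq_one_or (Perm.sign σ) with h | h <;>
      rw [h] <;> simp [bs, Equiv.Perm.sign_swap]
  set N := Fintype.card (Q ⊕ Bool) with hN
  let e : (Q ⊕ Bool) ≃ Fin N := Fintype.equivFin _
  let Φ : Perm Q →* Matrix.specialOrthogonalGroup (Fin N) ℝ :=
  { toFun := fun σ =>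
      ⟨reindexAlgEquiv ℝ ℝ e (permMatrixHom _ (J σ)),
        reindex_mem_SO e (permMatrixHom_mem_SO (hsignJ σ))⟩
    map_one' := Subtype.ext (by simp only [_root_.map_one]; rfl)
    map_mul' := fun σ τ => Subtype.ext (by
      show reindexAlgEquiv ℝ ℝ e (permMatrixHom _ (J (σ * τ))) =
        reindexAlgEquiv ℝ ℝ e (permMatrixHom _ (J σ)) *
          reindexAlgEquiv ℝ ℝ e (permMatrixHom _ (J τ))
      rw [_root_.map_mul, _root_.map_mul, _root_.map_mul]) }
  let c : Q →* Perm Q := MulAction.toPermHom Q Q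
  have hN1 : 1 ≤ N := Fintype.card_pos_iff.mpr ⟨Sum.inr true⟩
  obtain ⟨ρ', hρ'⟩ := hfactor N hN1 (Φ.comp (c.comp f))
  have h1 : Φ (c (f g)) = 1 := by
    have := DFunLike.congr_fun hρ' g
    simp only [MonoidHom.comp_apply] at this
    rw [← this, hg1, _root_.map_one]
  have h2 : reindexAlgEquiv ℝ ℝ e (permMatrixHom _ (J (c (f g)))) = 1 :=
    congrArg Subtype.val h1
  have h3 : permMatrixHom _ (J (c (f g))) = 1 := by
    apply (reindexAlgEquiv ℝ ℝ e).injective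
    rw [h2, _root_.map_one]
  have h4 : (J (c (f g)))⁻¹ = 1 := (permMatrix_eq_one_iff _).mp h3
  have h5 : J (c (f g)) = 1 := by rwa [inv_eq_one] at h4
  have h6 : c (f g) = 1 := by
    ext q
    have := congrArg (fun p => p (Sum.inl q)) ((hJ (c (f g))) ▸ h5)
    simpa using this
  apply hf
  have := congrArg (fun p => p 1) h6
  simpa [c] using this
end
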